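/- Fix n ≥ 1 and pairwise distinct labels u_1,…,u_n ∈ (0,1). If v_i and v'_i are positive integers with v_i ≤ v'_i for every i, then R((u_i,v'_i)_{1≤i≤n}) ≤ R((u_i,v_i)_{1≤i≤n}): giving each item at least as many lives produces at most as many heaps. -/

import Mathlib

open MeasureTheory ProbabilityTheory Filter Topology
open scoped ENNReal NNReal

namespace HeapPatience

/-- Decrement by one the number of lives of the (first) alive particle with label `x`. -/
noncomputable def decrementAt : List (ℝ × ℕ) → ℝ → List (ℝ × ℕ)
  | [], _ => []
  | p :: rest, x =>
      if p.1 = x ∧ 0 < p.2 then (p.1, p.2 - 1) :: rest else p :: decrementAt rest x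

/-- One step of the heap patience sorting algorithm, where `acc = (state, number of roots)`:
the new item is attached as a child of the alive particle (a particle with at least one
remaining life) having the largest label smaller than the label of the item, and that
particle loses one life; if there is no such particle, a new root (tree) is created. -/
noncomputable def step (acc : List (ℝ × ℕ) × ℕ) (item : ℝ × ℕ) : List (ℝ × ℕ) × ℕ :=
  match (acc.1.filter fun p => decide (0 < p.2 ∧ p.1 < item.1)).argmax Prod.fst with
  | none => (item :: acc.1, acc.2 + 1)
  | some q => (item :: decrementAt acc.1 q.1, acc.2)

/-- Run the heap patience sorting algorithm on the items `(label, lives)` in order; returns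
the final state (the particles with their remaining lives) and the number of roots created. -/
noncomputable def run (items : List (ℝ × ℕ)) : List (ℝ × ℕ) × ℕ :=
  items.foldl step ([], 0)

/-- `R items` : the number of heaps (trees) produced by the heap patience sorting
algorithm applied to the finite sequence `items` of pairs `(label, number of lives)`. -/
noncomputable def R (items : List (ℝ × ℕ)) : ℕ := (run items).2

/-- `D items` : after running the algorithm, the number of dead particles whose label is
smaller than the label of every alive particle, i.e. the number of leading zeros of the
label-ordered vector of remaining lives. -/
noncomputable def D (items : List (ℝ × ℕ)) : ℕ :=
  ((run items).1.filter fun p =>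
      decide (p.2 = 0 ∧ ∀ q ∈ (run items).1, 0 < q.2 → p.1 < q.1)).length

/-- `Rn U ν n ω` : the random number of heaps `𝐑(n)` needed to sort the first `n`
random items `(U i ω, ν i ω)`. -/
noncomputable def Rn {Ω : Type} (U : ℕ → Ω → ℝ) (ν : ℕ → Ω → ℕ) (n : ℕ) (ω : Ω) : ℕ :=
  R ((List.range n).map fun i => (U i ω, ν i ω))

/-- `Dn U ν n ω` : the random variable `D_n`, the number of dead items whose label is
smaller than the label of every alive item after sorting the first `n` random items. -/
noncomputable def Dn {Ω : Type} (U : ℕ → Ω → ℝ) (ν : ℕ → Ω → ℕ) (n : ℕ) (ω : Ω) : ℕ :=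
  D ((List.range n).map fun i => (U i ω, ν i ω))

/-- The uniform probability measure on the interval `(0,1)`. -/
noncomputable def unif01 : Measure ℝ := volume.restrict (Set.Ioo 0 1)


lemma decrementAt_map_fst (s : List (ℝ × ℕ)) (x : ℝ) :
    (decrementAt s x).map Prod.fst = s.map Prod.fst := by
  induction s with
  | nil => rfl
  | cons p rest ih =>
    rw [decrementAt]
    split <;> simp [ih]

lemma step_none {acc : List (ℝ × ℕ) × ℕ} {it : ℝ × ℕ}
    (h : (acc.1.filter fun p => decide (0 < p.2 ∧ p.1 < it.1)).argmax Prod.fst = none) :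
    step acc it = (it :: acc.1, acc.2 + 1) := by
  rw [step, h]

lemma step_some {acc : List (ℝ × ℕ) × ℕ} {it : ℝ × ℕ} {q : ℝ × ℕ}
    (h : (acc.1.filter fun p => decide (0 < p.2 ∧ p.1 < it.1)).argmax Prod.fst = some q) :
    step acc it = (it :: decrementAt acc.1 q.1, acc.2) := by
  rw [step, h]

lemma decrementAt_bump (x w : ℝ) (h : w ≠ x) (k : ℕ) :
    ∀ (pre post : List (ℝ × ℕ)), ∃ pre2 post2,
      decrementAt (pre ++ (w, k) :: post) x = pre2 ++ (w, k) :: post2 ∧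
      decrementAt (pre ++ (w, k + 1) :: post) x = pre2 ++ (w, k + 1) :: post2
  | [], post => by
      refine ⟨[], decrementAt post x, ?_, ?_⟩ <;>
      · rw [List.nil_append, decrementAt, if_neg]
        · rfl
        · rintro ⟨h1, -⟩; exact h h1
  | p :: pre, post => by
      obtain ⟨pre2, post2, h1, h2⟩ := decrementAt_bump x w h k pre post
      by_cases hp : p.1 = x ∧ 0 < p.2
      · refine ⟨(p.1, p.2 - 1) :: pre, post, ?_, ?_⟩ <;>
        · rw [List.cons_append, decrementAt, if_pos hp]; rfl
      · refine ⟨p :: pre2, post2, ?_, ?_⟩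
        · rw [List.cons_append, decrementAt, if_neg hp, h1]; rfl
        · rw [List.cons_append, decrementAt, if_neg hp, h2]; rfl

lemma decrementAt_alive : ∀ (s : List (ℝ × ℕ)) (a : ℝ),
    (∃ p ∈ s, p.1 = a ∧ 0 < p.2) →
    ∃ pre post m, decrementAt s a = pre ++ (a, m) :: post ∧ s = pre ++ (a, m + 1) :: post
  | [], a => by rintro ⟨p, hp, -⟩; simp at hp
  | p :: rest, a => by
      rintro ⟨q, hq, hqa, hq2⟩
      by_cases hp : p.1 = a ∧ 0 < p.2
      · refine ⟨[], rest, p.2 - 1, ?_, ?_⟩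
        · rw [decrementAt, if_pos hp]; simp [hp.1]
        · have : (a, p.2 - 1 + 1) = p := by
            have := hp.2
            ext <;> simp [hp.1] <;> omega
          simp [this]
      · have hqrest : q ∈ rest := by
          rcases List.mem_cons.mp hq with h | h
          · exact absurd ⟨h ▸ hqa, h ▸ hq2⟩ hp
          · exact h
        obtain ⟨pre, post, m, h1, h2⟩ := decrementAt_alive rest a ⟨q, hqrest, hqa, hq2⟩
        exact ⟨p :: pre, post, m, by rw [decrementAt, if_neg hp, h1]; rfl,
          by rw [h2]; rfl⟩

lemma decrementAt_at (w : ℝ) (m : ℕ) (hm : 0 < m) :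
    ∀ (pre post : List (ℝ × ℕ)), (∀ p ∈ pre, p.1 ≠ w) →
    decrementAt (pre ++ (w, m) :: post) w = pre ++ (w, m - 1) :: post
  | [], post, _ => by rw [List.nil_append, decrementAt, if_pos ⟨rfl, hm⟩]; rfl
  | p :: pre, post, h => by
      rw [List.cons_append, decrementAt, if_neg, decrementAt_at w m hm pre post
        (fun q hq => h q (List.mem_cons_of_mem _ hq))]
      · rfl
      · rintro ⟨h1, -⟩; exact h p (List.mem_cons_self) h1

lemma argmax_fst_congr : ∀ (l l' : List (ℝ × ℕ)),
    l.map Prod.fst = l'.map Prod.fst →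
    Option.map Prod.fst (l.argmax Prod.fst) = Option.map Prod.fst (l'.argmax Prod.fst)
  | [], [], _ => rfl
  | [], p' :: l', h => by simp at h
  | p :: l, [], h => by simp at h
  | p :: l, p' :: l', h => by
      simp only [List.map_cons, List.cons.injEq] at h
      obtain ⟨h1, h2⟩ := h
      have ih := argmax_fst_congr l l' h2
      rw [List.argmax_cons, List.argmax_cons]
      cases hl : l.argmax Prod.fst with
      | none =>
        cases hl' : l'.argmax Prod.fst with
        | none => simp [h1]
        | some q' => rw [hl, hl'] at ih; simp at ih
      | some q =>
        cases hl' : l'.argmax Prod.fst with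
        | none => rw [hl, hl'] at ih; simp at ih
        | some q' =>
          rw [hl, hl'] at ih
          simp only [Option.map_some, Option.some.injEq] at ih
          simp only [h1, ih]
          split_ifs <;> simp [ih, h1]

def Bump (s s' : List (ℝ × ℕ)) : Prop :=
  ∃ pre post w k, s = pre ++ (w, k) :: post ∧ s' = pre ++ (w, k + 1) :: post

def Rel (s s' : List (ℝ × ℕ)) : Prop := s' = s ∨ Bump s s'

lemma step_rel_bump (pre post : List (ℝ × ℕ)) (w : ℝ) (k : ℕ) (r r' : ℕ)
    (hnd : ((pre ++ (w, k) :: post).map Prod.fst).Nodup) (hr : r' ≤ r) (it : ℝ × ℕ) :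
    Rel (step (pre ++ (w, k) :: post, r) it).1 (step (pre ++ (w, k + 1) :: post, r') it).1 ∧
      (step (pre ++ (w, k + 1) :: post, r') it).2 ≤ (step (pre ++ (w, k) :: post, r) it).2 := by
  classical
  set s : List (ℝ × ℕ) := pre ++ (w, k) :: post with hs
  set s' : List (ℝ × ℕ) := pre ++ (w, k + 1) :: post with hs'
  set P : ℝ × ℕ → Bool := fun p => decide (0 < p.2 ∧ p.1 < it.1) with hPdef
  have hnd' : (pre.map Prod.fst ++ w :: post.map Prod.fst).Nodup := by
    rw [hs] at hnd; simpa using hnd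
  have hwpre : ∀ p ∈ pre, p.1 ≠ w := by
    intro p hp hpe
    exact (List.nodup_append'.mp hnd').2.2 (List.mem_map_of_mem hp) (by simp [hpe])
  have hwpost : ∀ p ∈ post, p.1 ≠ w := by
    intro p hp hpe
    have h2 := (List.nodup_append'.mp hnd').2.1
    rw [List.nodup_cons] at h2
    exact h2.1 (hpe ▸ List.mem_map_of_mem hp)
  by_cases hwu : w < it.1
  · by_cases hk : k = 0
    · subst hk
      have hF : s.filter P = pre.filter P ++ post.filter P := by
        simp [hs, List.filter_append, List.filter_cons, hPdef]
      have hF' : s'.filter P = pre.filter P ++ (w, 1) :: post.filter P := by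
        simp [hs', List.filter_append, List.filter_cons, hPdef, hwu]
      rcases hA : (s.filter P).argmax Prod.fst with _ | q
      · have hFnil : s.filter P = [] := List.argmax_eq_none.mp hA
        rw [hF] at hFnil
        rcases List.append_eq_nil_iff.mp hFnil with ⟨hpre0, hpost0⟩
        have hA' : (s'.filter P).argmax Prod.fst = some (w, 1) := by
          rw [hF', hpre0, hpost0]
          simp
        rw [step_none hA, step_some hA']
        have hdec : decrementAt s' w = s := by
          have := decrementAt_at w 1 one_pos pre post hwpre
          rw [hs, hs']
          simpa using this
        exact ⟨Or.inl (by rw [hdec]), by omega⟩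
      · have hqmem : q ∈ s.filter P := List.argmax_mem (Option.mem_def.mpr hA)
        rw [List.mem_filter] at hqmem
        have hq2 : 0 < q.2 ∧ q.1 < it.1 := by simpa [hPdef] using hqmem.2
        rcases hA' : (s'.filter P).argmax Prod.fst with _ | q'
        · exfalso
          have := List.argmax_eq_none.mp hA'
          rw [hF'] at this
          simp at this
        · have hq'mem : q' ∈ s'.filter P := List.argmax_mem (Option.mem_def.mpr hA')
          by_cases hq'w : q'.1 = w
          · rw [step_some hA, step_some hA']
            have hdec' : decrementAt s' q'.1 = s := by
              rw [hq'w, hs, hs']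
              have := decrementAt_at w 1 one_pos pre post hwpre
              simpa using this
            obtain ⟨A, B, m, hd1, hd2⟩ := decrementAt_alive s q.1 ⟨q, hqmem.1, rfl, hq2.1⟩
            refine ⟨Or.inr ⟨it :: A, B, q.1, m, ?_, ?_⟩, hr⟩
            · rw [hd1]; rfl
            · rw [hdec', hd2]; rfl
          · have hq'F : q' ∈ s.filter P := by
              rw [hF'] at hq'mem
              rw [hF]
              rcases List.mem_append.mp hq'mem with h | h
              · exact List.mem_append_left _ h
              · rcases List.mem_cons.mp h with h | h
                · exact absurd (by rw [h]) hq'w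
                · exact List.mem_append_right _ h
            have hqF' : q ∈ s'.filter P := by
              have hq1 : q ∈ s.filter P := List.mem_filter.mpr hqmem
              rw [hF] at hq1
              rw [hF']
              rcases List.mem_append.mp hq1 with h | h
              · exact List.mem_append_left _ h
              · exact List.mem_append_right _ (List.mem_cons_of_mem _ h)
            have he : q'.1 = q.1 :=
              le_antisymm (List.le_of_mem_argmax hq'F (Option.mem_def.mpr hA))
                (List.le_of_mem_argmax hqF' (Option.mem_def.mpr hA'))
            rw [step_some hA, step_some hA', he]
            obtain ⟨pre2, post2, hb1, hb2⟩ :=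
              decrementAt_bump q.1 w (fun hh => hq'w (he.trans hh.symm)) 0 pre post
            refine ⟨Or.inr ⟨it :: pre2, post2, w, 0, ?_, ?_⟩, hr⟩
            · rw [hs, hb1]; rfl
            · rw [hs', hb2]; rfl
    · have hk' : 0 < k := Nat.pos_of_ne_zero hk
      have hmapeq : (s.filter P).map Prod.fst = (s'.filter P).map Prod.fst := by
        simp [hs, hs', List.filter_append, List.filter_cons, hPdef, hwu, hk']
      have hcong := argmax_fst_congr _ _ hmapeq
      rcases hA : (s.filter P).argmax Prod.fst with _ | q
      · exfalso
        have hnil := List.argmax_eq_none.mp hA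
        rw [hs] at hnil
        simp [List.filter_append, List.filter_cons, hPdef, hwu, hk'] at hnil
      · rcases hA' : (s'.filter P).argmax Prod.fst with _ | q'
        · rw [hA, hA'] at hcong; simp at hcong
        · rw [hA, hA'] at hcong
          simp only [Option.map_some, Option.some.injEq] at hcong
          rw [step_some hA, step_some hA']
          by_cases haw : q.1 = w
          · have hdk : decrementAt s q.1 = pre ++ (w, k - 1) :: post := by
              rw [haw, hs]; exact decrementAt_at w k hk' pre post hwpre
            have hdk' : decrementAt s' q'.1 = pre ++ (w, k) :: post := by
              rw [← hcong, haw, hs']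
              have := decrementAt_at w (k + 1) (by omega) pre post hwpre
              simpa using this
            refine ⟨Or.inr ⟨it :: pre, post, w, k - 1, ?_, ?_⟩, hr⟩
            · rw [hdk]; rfl
            · rw [hdk']
              have hkk : k - 1 + 1 = k := by omega
              rw [hkk]; rfl
          · obtain ⟨pre2, post2, hb1, hb2⟩ :=
              decrementAt_bump q.1 w (fun hh => haw hh.symm) k pre post
            refine ⟨Or.inr ⟨it :: pre2, post2, w, k, ?_, ?_⟩, hr⟩
            · rw [hs, hb1]; rfl
            · rw [hs', ← hcong, hb2]; rfl
  · have hFeq : s.filter P = s'.filter P := by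
      simp [hs, hs', List.filter_append, List.filter_cons, hPdef, hwu]
    rcases hA : (s.filter P).argmax Prod.fst with _ | q
    · rw [step_none hA, step_none (show (s'.filter P).argmax Prod.fst = none by
        rw [← hFeq]; exact hA)]
      exact ⟨Or.inr ⟨it :: pre, post, w, k, rfl, rfl⟩, by omega⟩
    · have hA' : (s'.filter P).argmax Prod.fst = some q := by rw [← hFeq]; exact hA
      rw [step_some hA, step_some hA']
      have hq : q ∈ s.filter P := List.argmax_mem (Option.mem_def.mpr hA)
      rw [List.mem_filter] at hq
      have hq2 : 0 < q.2 ∧ q.1 < it.1 := by simpa [hPdef] using hq.2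
      have hqw : w ≠ q.1 := fun he => hwu (he ▸ hq2.2)
      obtain ⟨pre2, post2, hb1, hb2⟩ := decrementAt_bump q.1 w hqw k pre post
      exact ⟨Or.inr ⟨it :: pre2, post2, w, k, by rw [hs, hb1]; rfl,
        by rw [hs', hb2]; rfl⟩, hr⟩



lemma step_fst (s : List (ℝ × ℕ)) (r : ℕ) (it : ℝ × ℕ) :
    ((step (s, r) it).1).map Prod.fst = it.1 :: s.map Prod.fst := by
  rcases hA : (s.filter fun p => decide (0 < p.2 ∧ p.1 < it.1)).argmax Prod.fst with _ | q
  · rw [step_none hA]; rfl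
  · rw [step_some hA]; simp [decrementAt_map_fst]

lemma foldl_map_fst : ∀ (l : List (ℝ × ℕ)) (s : List (ℝ × ℕ)) (r : ℕ),
    ((l.foldl step (s, r)).1).map Prod.fst = (l.map Prod.fst).reverse ++ s.map Prod.fst
  | [], s, r => by simp
  | it :: l, s, r => by
      rw [List.foldl_cons]
      rcases hst : step (s, r) it with ⟨t, r2⟩
      have ht : t.map Prod.fst = it.1 :: s.map Prod.fst := by
        rw [← step_fst s r it, hst]
      rw [foldl_map_fst l t r2, ht]
      simp

lemma foldl_rel : ∀ (l : List (ℝ × ℕ)) (s s' : List (ℝ × ℕ)) (r r' : ℕ),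
    (s.map Prod.fst ++ l.map Prod.fst).Nodup → Rel s s' → r' ≤ r →
    (l.foldl step (s', r')).2 ≤ (l.foldl step (s, r)).2
  | [], s, s', r, r', _, _, hr => hr
  | it :: l, s, s', r, r', hnd, hrel, hr => by
      simp only [List.map_cons] at hnd
      rw [List.foldl_cons, List.foldl_cons]
      rcases hst : step (s, r) it with ⟨t, r2⟩
      rcases hst' : step (s', r') it with ⟨t', r2'⟩
      have hkey : Rel t t' ∧ r2' ≤ r2 := by
        rcases hrel with heq | ⟨pre, post, w, k, h1, h2⟩
        · subst s'
          rcases hA : (s.filter fun p => decide (0 < p.2 ∧ p.1 < it.1)).argmax Prod.fst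
            with _ | q
          · rw [step_none hA] at hst hst'
            simp only [Prod.mk.injEq] at hst hst'
            exact ⟨Or.inl (hst'.1.symm.trans hst.1), by omega⟩
          · rw [step_some hA] at hst hst'
            simp only [Prod.mk.injEq] at hst hst'
            refine ⟨Or.inl (hst'.1.symm.trans hst.1), by omega⟩
        · subst h1; subst h2
          have := step_rel_bump pre post w k r r'
            (List.Nodup.of_append_left hnd) hr it
          rw [hst, hst'] at this
          exact this
      have ht : t.map Prod.fst = it.1 :: s.map Prod.fst := by
        rw [← step_fst s r it, hst]
      have hndt : (t.map Prod.fst ++ l.map Prod.fst).Nodup := by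
        rw [ht, List.cons_append]
        exact List.perm_middle.nodup hnd
      exact foldl_rel l t t' r2 r2' hndt hkey.1 hkey.2

lemma R_le_bump (l₁ l₂ : List (ℝ × ℕ)) (w : ℝ) (k : ℕ)
    (hnd : ((l₁ ++ (w, k) :: l₂).map Prod.fst).Nodup) :
    R (l₁ ++ (w, k + 1) :: l₂) ≤ R (l₁ ++ (w, k) :: l₂) := by
  simp only [List.map_append, List.map_cons] at hnd
  unfold R run
  rw [List.foldl_append, List.foldl_append, List.foldl_cons, List.foldl_cons]
  rcases hfold : List.foldl step ([], 0) l₁ with ⟨s, r⟩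
  have hsmap : s.map Prod.fst = (l₁.map Prod.fst).reverse := by
    have := foldl_map_fst l₁ ([] : List (ℝ × ℕ)) 0
    rw [hfold] at this; simpa using this
  have hperm : List.Perm (w :: (s.map Prod.fst ++ l₂.map Prod.fst))
      (l₁.map Prod.fst ++ w :: l₂.map Prod.fst) := by
    rw [hsmap]
    exact (((l₁.map Prod.fst).reverse_perm.append_right _).cons w).trans
      List.perm_middle.symm
  have hndgoal : ∀ X : List (ℝ × ℕ), X.map Prod.fst = s.map Prod.fst →
      (((w, k) :: X).map Prod.fst ++ l₂.map Prod.fst).Nodup := by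
    intro X hX
    simp only [List.map_cons, List.cons_append, hX]
    exact hperm.symm.nodup hnd
  rcases hA : (s.filter fun p => decide (0 < p.2 ∧ p.1 < w)).argmax Prod.fst with _ | q
  · rw [step_none (it := (w, k)) hA, step_none (it := (w, k + 1)) hA]
    exact foldl_rel l₂ _ _ _ _ (hndgoal s rfl) (Or.inr ⟨[], s, w, k, rfl, rfl⟩) le_rfl
  · rw [step_some (it := (w, k)) hA, step_some (it := (w, k + 1)) hA]
    exact foldl_rel l₂ _ _ _ _ (hndgoal _ (decrementAt_map_fst s q.1))
      (Or.inr ⟨[], decrementAt s q.1, w, k, rfl, rfl⟩) le_rfl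


lemma main_aux (n : ℕ) (u : Fin n → ℝ) (huinj : Function.Injective u) :
    ∀ (N : ℕ) (v v' : Fin n → ℕ), (∑ i, (v' i - v i)) = N → (∀ i, v i ≤ v' i) →
    R ((List.finRange n).map fun i => (u i, v' i)) ≤
      R ((List.finRange n).map fun i => (u i, v i))
  | 0, v, v', hsum, hle => by
      have hvv : v' = v := by
        funext i
        have h1 : v' i - v i = 0 :=
          Finset.sum_eq_zero_iff.mp hsum i (Finset.mem_univ i)
        have := hle i
        omega
      rw [hvv]
  | N + 1, v, v', hsum, hle => by
      have hex : ∃ i, v i < v' i := by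
        by_contra h
        push_neg at h
        have hz : ∀ i, v' i - v i = 0 := fun i => by have := h i; omega
        simp [hz] at hsum
      obtain ⟨i, hi⟩ := hex
      set v'' : Fin n → ℕ := Function.update v i (v i + 1) with hv''
      have hle2 : ∀ j, v'' j ≤ v' j := by
        intro j
        by_cases hj : j = i
        · subst hj; simp only [hv'', Function.update_self]; omega
        · simp only [hv'', Function.update_of_ne hj]; exact hle j
      have hsum2 : (∑ j, (v' j - v'' j)) = N := by
        have key : (∑ j, ((v' j - v'' j) + (if j = i then 1 else 0))) =
            ∑ j, (v' j - v j) := by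
          apply Finset.sum_congr rfl
          intro j _
          by_cases hj : j = i
          · rw [hj]
            simp only [hv'', Function.update_self, if_true, eq_self_iff_true]
            omega
          · simp [hv'', Function.update_of_ne hj, hj]
        rw [Finset.sum_add_distrib] at key
        simp only [Finset.sum_ite_eq', Finset.mem_univ, if_pos] at key
        omega
      have h1 : R ((List.finRange n).map fun j => (u j, v' j)) ≤
          R ((List.finRange n).map fun j => (u j, v'' j)) :=
        main_aux n u huinj N v'' v' hsum2 hle2
      refine h1.trans ?_
      obtain ⟨L₁, L₂, hL⟩ := List.append_of_mem (List.mem_finRange i)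
      have hndfin := List.nodup_finRange n
      rw [hL] at hndfin
      have hiL₁ : i ∉ L₁ := fun h => (List.nodup_append'.mp hndfin).2.2 h
        (List.mem_cons_self)
      have hmapcongr : ∀ L : List (Fin n), i ∉ L →
          L.map (fun j => (u j, v'' j)) = L.map (fun j => (u j, v j)) := by
        intro L hL'
        apply List.map_congr_left
        intro j hj
        have : j ≠ i := fun h => hL' (h ▸ hj)
        simp [hv'', Function.update_of_ne this]
      have hiL₂ : i ∉ L₂ := by
        have h2 := (List.nodup_append'.mp hndfin).2.1
        rw [List.nodup_cons] at h2
        exact h2.1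
      have hmap1 : (List.finRange n).map (fun j => (u j, v j)) =
          L₁.map (fun j => (u j, v j)) ++ (u i, v i) :: L₂.map (fun j => (u j, v j)) := by
        rw [hL]; simp
      have hmap2 : (List.finRange n).map (fun j => (u j, v'' j)) =
          L₁.map (fun j => (u j, v j)) ++ (u i, v i + 1) :: L₂.map (fun j => (u j, v j)) := by
        rw [hL]
        simp only [List.map_append, List.map_cons]
        rw [hmapcongr L₁ hiL₁, hmapcongr L₂ hiL₂]
        have : v'' i = v i + 1 := by simp [hv'']
        rw [this]
      rw [hmap1, hmap2]
      apply R_le_bump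
      have : ((L₁.map (fun j => (u j, v j)) ++ (u i, v i) ::
          L₂.map (fun j => (u j, v j))).map Prod.fst) = (List.finRange n).map u := by
        rw [← hmap1, hL]
        simp [Function.comp_def]
      rw [this]
      exact (List.nodup_finRange n).map huinj


/-- Giving each item at least as many lives produces at most as many heaps. -/
theorem R_antitone_in_lives
    (n : ℕ) (u : Fin n → ℝ)
    (hu : ∀ i, u i ∈ Set.Ioo (0 : ℝ) 1) (huinj : Function.Injective u)
    (v v' : Fin n → ℕ) (hv : ∀ i, 1 ≤ v i) (hle : ∀ i, v i ≤ v' i) :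
    R ((List.finRange n).map fun i => (u i, v' i))
      ≤ R ((List.finRange n).map fun i => (u i, v i)) :=
  main_aux n u huinj (∑ i, (v' i - v i)) v v' rfl hle

end HeapPatience
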